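/- On (ℂ²)^{⊗4}, let |ψ⁻⟩ = (|01⟩ − |10⟩)/√2 and |ψ⁺⟩ = (|01⟩ + |10⟩)/√2, and define H = |ψ⁻⟩⟨ψ⁻|^{(1,2)} ⊗ I^{(3,4)} + I^{(1)} ⊗ (|ψ⁻⟩⟨ψ⁻| + |ψ⁺⟩⟨ψ⁺|)^{(2,3)} ⊗ I^{(4)} + I^{(1,2)} ⊗ |ψ⁻⟩⟨ψ⁻|^{(3,4)}. Then ker(H) = span{|0000⟩, |1111⟩}, so dim ker(H) = 2. -/

import Mathlib

noncomputable section

/-- The singlet state `|ψ⁻⟩ = (|01⟩ − |10⟩)/√2` on two qubits. -/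
def psim : Fin 2 × Fin 2 → ℂ := fun p =>
  if p = (0, 1) then (1 : ℂ) / Real.sqrt 2
  else if p = (1, 0) then -((1 : ℂ) / Real.sqrt 2) else 0

/-- The triplet state `|ψ⁺⟩ = (|01⟩ + |10⟩)/√2` on two qubits. -/
def psip : Fin 2 × Fin 2 → ℂ := fun p =>
  if p = (0, 1) then (1 : ℂ) / Real.sqrt 2
  else if p = (1, 0) then (1 : ℂ) / Real.sqrt 2 else 0

/-- The Hamiltonian `H = |ψ⁻⟩⟨ψ⁻|^{(1,2)} ⊗ I + I ⊗ (|ψ⁻⟩⟨ψ⁻| + |ψ⁺⟩⟨ψ⁺|)^{(2,3)} ⊗ I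
+ I ⊗ |ψ⁻⟩⟨ψ⁻|^{(3,4)}` on four qubits, as a matrix. -/
def Ham : Matrix (Fin 2 × Fin 2 × Fin 2 × Fin 2) (Fin 2 × Fin 2 × Fin 2 × Fin 2) ℂ :=
  fun p q =>
    psim (p.1, p.2.1) * (starRingEnd ℂ) (psim (q.1, q.2.1)) *
        (if p.2.2.1 = q.2.2.1 then 1 else 0) * (if p.2.2.2 = q.2.2.2 then 1 else 0)
      + (if p.1 = q.1 then 1 else 0) *
          (psim (p.2.1, p.2.2.1) * (starRingEnd ℂ) (psim (q.2.1, q.2.2.1))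
            + psip (p.2.1, p.2.2.1) * (starRingEnd ℂ) (psip (q.2.1, q.2.2.1))) *
          (if p.2.2.2 = q.2.2.2 then 1 else 0)
      + (if p.1 = q.1 then 1 else 0) * (if p.2.1 = q.2.1 then 1 else 0) *
          (psim (p.2.2.1, p.2.2.2) * (starRingEnd ℂ) (psim (q.2.2.1, q.2.2.2)))

/-- The basis state `|0000⟩`. -/
def e0000 : Fin 2 × Fin 2 × Fin 2 × Fin 2 → ℂ := fun p => if p = (0, 0, 0, 0) then 1 else 0

/-- The basis state `|1111⟩`. -/
def e1111 : Fin 2 × Fin 2 × Fin 2 × Fin 2 → ℂ := fun p => if p = (1, 1, 1, 1) then 1 else 0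

/-- Sign pattern of the singlet state. -/
def sg : Fin 2 × Fin 2 → ℂ := fun a => if a = (0,1) then 1 else if a = (1,0) then -1 else 0

/-- Sign pattern of the triplet state. -/
def sp : Fin 2 × Fin 2 → ℂ := fun a => if a = (0,1) then 1 else if a = (1,0) then 1 else 0

lemma hhalf : ((1:ℂ)/Real.sqrt 2) * ((1:ℂ)/Real.sqrt 2) = 1/2 := by
  rw [div_mul_div_comm, one_mul, ← Complex.ofReal_mul, Real.mul_self_sqrt (by norm_num)]
  norm_num

lemma psim_eq (a : Fin 2 × Fin 2) : psim a = sg a * ((1:ℂ)/Real.sqrt 2) := by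
  unfold psim sg; split_ifs <;> ring

lemma psip_eq (a : Fin 2 × Fin 2) : psip a = sp a * ((1:ℂ)/Real.sqrt 2) := by
  unfold psip sp; split_ifs <;> ring

lemma conj_sg (a : Fin 2 × Fin 2) : (starRingEnd ℂ) (sg a) = sg a := by
  unfold sg; split_ifs <;> simp

lemma conj_sp (a : Fin 2 × Fin 2) : (starRingEnd ℂ) (sp a) = sp a := by
  unfold sp; split_ifs <;> simp

lemma conj_c : (starRingEnd ℂ) ((1:ℂ)/Real.sqrt 2) = (1:ℂ)/Real.sqrt 2 := by
  simp [Complex.conj_ofReal]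

lemma psim_mul (a b : Fin 2 × Fin 2) :
    psim a * (starRingEnd ℂ) (psim b) = sg a * sg b * (1/2) := by
  rw [psim_eq, psim_eq, map_mul, conj_sg, conj_c,
    show sg a * ((1:ℂ)/Real.sqrt 2) * (sg b * ((1:ℂ)/Real.sqrt 2))
      = sg a * sg b * (((1:ℂ)/Real.sqrt 2) * ((1:ℂ)/Real.sqrt 2)) from by ring, hhalf]

lemma psip_mul (a b : Fin 2 × Fin 2) :
    psip a * (starRingEnd ℂ) (psip b) = sp a * sp b * (1/2) := by
  rw [psip_eq, psip_eq, map_mul, conj_sp, conj_c,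
    show sp a * ((1:ℂ)/Real.sqrt 2) * (sp b * ((1:ℂ)/Real.sqrt 2))
      = sp a * sp b * (((1:ℂ)/Real.sqrt 2) * ((1:ℂ)/Real.sqrt 2)) from by ring, hhalf]

lemma Ham_eq (p q : Fin 2 × Fin 2 × Fin 2 × Fin 2) : Ham p q =
    sg (p.1, p.2.1) * sg (q.1, q.2.1) * (1/2) *
        (if p.2.2.1 = q.2.2.1 then 1 else 0) * (if p.2.2.2 = q.2.2.2 then 1 else 0)
      + (if p.1 = q.1 then 1 else 0) *
          (sg (p.2.1, p.2.2.1) * sg (q.2.1, q.2.2.1) * (1/2)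
            + sp (p.2.1, p.2.2.1) * sp (q.2.1, q.2.2.1) * (1/2)) *
          (if p.2.2.2 = q.2.2.2 then 1 else 0)
      + (if p.1 = q.1 then 1 else 0) * (if p.2.1 = q.2.1 then 1 else 0) *
          (sg (p.2.2.1, p.2.2.2) * sg (q.2.2.1, q.2.2.2) * (1/2)) := by
  unfold Ham; rw [psim_mul, psim_mul, psim_mul, psip_mul]

set_option maxHeartbeats 2000000 in
lemma ker_sub (v : Fin 2 × Fin 2 × Fin 2 × Fin 2 → ℂ) (hv : Ham.mulVec v = 0) :
    v = v (0,0,0,0) • e0000 + v (1,1,1,1) • e1111 := by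
  have E := fun p => congrFun hv p
  simp only [Matrix.mulVec, dotProduct, Pi.zero_apply, Fintype.sum_prod_type,
    Fin.sum_univ_two] at E
  have h0001 := E (0,0,0,1)
  norm_num [Ham_eq, sg, sp, Prod.ext_iff, Fin.ext_iff] at h0001
  have h0010 := E (0,0,1,0)
  norm_num [Ham_eq, sg, sp, Prod.ext_iff, Fin.ext_iff] at h0010
  have h0011 := E (0,0,1,1)
  norm_num [Ham_eq, sg, sp, Prod.ext_iff, Fin.ext_iff] at h0011
  have h0100 := E (0,1,0,0)
  norm_num [Ham_eq, sg, sp, Prod.ext_iff, Fin.ext_iff] at h0100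
  have h0101 := E (0,1,0,1)
  norm_num [Ham_eq, sg, sp, Prod.ext_iff, Fin.ext_iff] at h0101
  have h0110 := E (0,1,1,0)
  norm_num [Ham_eq, sg, sp, Prod.ext_iff, Fin.ext_iff] at h0110
  have h0111 := E (0,1,1,1)
  norm_num [Ham_eq, sg, sp, Prod.ext_iff, Fin.ext_iff] at h0111
  have h1000 := E (1,0,0,0)
  norm_num [Ham_eq, sg, sp, Prod.ext_iff, Fin.ext_iff] at h1000
  have h1001 := E (1,0,0,1)
  norm_num [Ham_eq, sg, sp, Prod.ext_iff, Fin.ext_iff] at h1001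
  have h1010 := E (1,0,1,0)
  norm_num [Ham_eq, sg, sp, Prod.ext_iff, Fin.ext_iff] at h1010
  have h1011 := E (1,0,1,1)
  norm_num [Ham_eq, sg, sp, Prod.ext_iff, Fin.ext_iff] at h1011
  have h1100 := E (1,1,0,0)
  norm_num [Ham_eq, sg, sp, Prod.ext_iff, Fin.ext_iff] at h1100
  have h1101 := E (1,1,0,1)
  norm_num [Ham_eq, sg, sp, Prod.ext_iff, Fin.ext_iff] at h1101
  have h1110 := E (1,1,1,0)
  norm_num [Ham_eq, sg, sp, Prod.ext_iff, Fin.ext_iff] at h1110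
  clear E hv
  have z0010 : v (0,0,1,0) = 0 := by linear_combination h0001 + h0010
  have z0001 : v (0,0,0,1) = 0 := by linear_combination 3*h0001 + h0010
  have z0011 : v (0,0,1,1) = 0 := by linear_combination h0011
  have z0100 : v (0,1,0,0) = 0 := by linear_combination h0100 + h1000
  have z1000 : v (1,0,0,0) = 0 := by linear_combination h0100 + 3*h1000
  have z1011 : v (1,0,1,1) = 0 := by linear_combination h0111 + h1011
  have z0111 : v (0,1,1,1) = 0 := by linear_combination 3*h0111 + h1011
  have z1101 : v (1,1,0,1) = 0 := by linear_combination h1101 + h1110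
  have z1110 : v (1,1,1,0) = 0 := by linear_combination h1101 + 3*h1110
  have z1100 : v (1,1,0,0) = 0 := by linear_combination h1100
  have z0101 : v (0,1,0,1) = 0 := by
    linear_combination (3/4)*h0101 + (1/2)*h0110 + (1/2)*h1001 + (1/4)*h1010
  have z1010 : v (1,0,1,0) = 0 := by
    linear_combination (1/4)*h0101 + (1/2)*h0110 + (1/2)*h1001 + (3/4)*h1010
  have z0110 : v (0,1,1,0) = 0 := by linear_combination h0110 + (1/2)*z0101 + (1/2)*z1010
  have z1001 : v (1,0,0,1) = 0 := by linear_combination h1001 + (1/2)*z0101 + (1/2)*z1010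
  funext p
  obtain ⟨a, b, c, d⟩ := p
  simp only [Pi.add_apply, Pi.smul_apply, smul_eq_mul, e0000, e1111]
  fin_cases a <;> fin_cases b <;> fin_cases c <;> fin_cases d <;>
    norm_num [Prod.ext_iff, Fin.ext_iff] <;>
    first
      | exact z0001 | exact z0010 | exact z0011 | exact z0100 | exact z0101
      | exact z0110 | exact z0111 | exact z1000 | exact z1001 | exact z1010
      | exact z1011 | exact z1100 | exact z1101 | exact z1110

set_option maxHeartbeats 1000000 in
lemma mulVec_e0000 : Ham.mulVec e0000 = 0 := by
  funext p
  simp only [Matrix.mulVec, dotProduct, e0000, Pi.zero_apply,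
    Fintype.sum_prod_type, Fin.sum_univ_two]
  obtain ⟨a, b, c, d⟩ := p
  fin_cases a <;> fin_cases b <;> fin_cases c <;> fin_cases d <;>
  norm_num [Ham_eq, sg, sp, Prod.ext_iff, Fin.ext_iff]

set_option maxHeartbeats 1000000 in
lemma mulVec_e1111 : Ham.mulVec e1111 = 0 := by
  funext p
  simp only [Matrix.mulVec, dotProduct, e1111, Pi.zero_apply,
    Fintype.sum_prod_type, Fin.sum_univ_two]
  obtain ⟨a, b, c, d⟩ := p
  fin_cases a <;> fin_cases b <;> fin_cases c <;> fin_cases d <;>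
  norm_num [Ham_eq, sg, sp, Prod.ext_iff, Fin.ext_iff]

lemma indep : LinearIndependent ℂ ![e0000, e1111] := by
  rw [LinearIndependent.pair_iff]
  intro s t hst
  have h0 := congrFun hst (0,0,0,0)
  have h1 := congrFun hst (1,1,1,1)
  norm_num [e0000, e1111, Prod.ext_iff, Fin.ext_iff] at h0 h1
  exact ⟨h0, h1⟩

/-- `ker H = span{|0000⟩, |1111⟩}`, so `dim ker H = 2`. -/
theorem stmt_15 :
    LinearMap.ker Ham.mulVecLin = Submodule.span ℂ {e0000, e1111} ∧
      Module.finrank ℂ ↥(LinearMap.ker Ham.mulVecLin) = 2 := by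
  have hker : LinearMap.ker Ham.mulVecLin = Submodule.span ℂ {e0000, e1111} := by
    apply le_antisymm
    · intro v hv
      rw [LinearMap.mem_ker, Matrix.mulVecLin_apply] at hv
      rw [ker_sub v hv]
      exact Submodule.add_mem _
        (Submodule.smul_mem _ _ (Submodule.subset_span (by simp)))
        (Submodule.smul_mem _ _ (Submodule.subset_span (by simp)))
    · rw [Submodule.span_le]
      rintro x hx
      rcases hx with rfl | rfl
      · rw [SetLike.mem_coe, LinearMap.mem_ker, Matrix.mulVecLin_apply]
        exact mulVec_e0000
      · rw [SetLike.mem_coe, LinearMap.mem_ker, Matrix.mulVecLin_apply]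
        exact mulVec_e1111
  refine ⟨hker, ?_⟩
  rw [hker, show ({e0000, e1111} : Set _) = Set.range ![e0000, e1111] from by
    simp [Matrix.range_cons, Matrix.range_empty, Set.pair_comm]]
  rw [finrank_span_eq_card indep]
  simp

end
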